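/- Let L ⊆ Σ^ω be any monitorable language and let M be a monitor for L with n states. Then there exists a finite word w of length at most (n−1)² such that for all finite words x ∈ Σ*, either xwΣ^ω ⊆ L or xwΣ^ω ∩ L = ∅. -/

import Mathlib

/-- Concatenation of a finite word with an infinite word. -/
def cat {A : Type*} (x : List A) (α : ℕ → A) : ℕ → A :=
  fun n => if h : n < x.length then x[n] else α (n - x.length)

/-- A monitor: a finite deterministic transition system with designated
absorbing states `⊥` (bot) and `⊤` (top), at least one of which is present,
such that from every state some present sink is reachable. -/
structure Monitor (A : Type*) where
  Q : Type
  finQ : Finite Q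
  δ : Q → A → Q
  init : Q
  bot : Option Q
  top : Option Q
  sink_exists : bot.isSome ∨ top.isSome
  bot_ne_top : ∀ p q, bot = some p → top = some q → p ≠ q
  bot_absorb : ∀ p a, bot = some p → δ p a = p
  top_absorb : ∀ p a, top = some p → δ p a = p
  reach : ∀ q : Q, ∃ w : List A, bot = some (w.foldl δ q) ∨ top = some (w.foldl δ q)

/-- `M` is a monitor for the language `L ⊆ Σ^ω`: whenever the run from the
initial state on a finite word `u` reaches `⊥` then `uΣ^ω ∩ L = ∅`, and
whenever it reaches `⊤` then `uΣ^ω ⊆ L`. -/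
def Monitor.IsMonitorFor {A : Type*} (M : Monitor A) (L : Set (ℕ → A)) : Prop :=
  ∀ u : List A,
    (M.bot = some (u.foldl M.δ M.init) → ∀ α, cat u α ∉ L) ∧
    (M.top = some (u.foldl M.δ M.init) → ∀ α, cat u α ∈ L)

/-- A language is monitorable if some monitor for it exists. -/
def Monitorable {A : Type*} (L : Set (ℕ → A)) : Prop :=
  ∃ M : Monitor A, M.IsMonitorFor L

/-- The number of states of a monitor, counting the states after merging
`⊥` and `⊤` into a single state. -/
noncomputable def Monitor.states {A : Type*} (M : Monitor A) : ℕ :=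
  Nat.card M.Q - (if M.bot.isSome && M.top.isSome then 1 else 0)

namespace MP
variable {A : Type*} (M : Monitor A)

def MSink (q : M.Q) : Prop := M.bot = some q ∨ M.top = some q

lemma msink_absorb {q : M.Q} (h : MSink M q) : ∀ w : List A, w.foldl M.δ q = q := by
  intro w
  induction w with
  | nil => rfl
  | cons a w ih =>
    have hq : M.δ q a = q := by
      rcases h with hb | ht
      · exact M.bot_absorb q a hb
      · exact M.top_absorb q a ht
    simpa [List.foldl_cons, hq] using ih

lemma reach_short (q : M.Q) :
    ∃ w : List A, w.length ≤ Nat.card {p : M.Q // ¬ MSink M p} ∧ MSink M (w.foldl M.δ q) := by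
  classical
  haveI := M.finQ
  obtain ⟨w₀, hw₀⟩ := M.reach q
  have hex : ∃ m, ∃ w : List A, w.length = m ∧ MSink M (w.foldl M.δ q) :=
    ⟨w₀.length, w₀, rfl, hw₀⟩
  obtain ⟨w, hwlen, hwsink⟩ := Nat.find_spec hex
  set m := Nat.find hex with hm
  refine ⟨w, ?_, hwsink⟩
  rw [hwlen]
  by_contra hlt
  push_neg at hlt
  have hmin : ∀ k < m, ∀ v : List A, v.length = k → ¬ MSink M (v.foldl M.δ q) := by
    intro k hk v hv hs
    exact Nat.find_min hex hk ⟨v, hv, hs⟩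
  have hns : ∀ i : Fin m, ¬ MSink M ((w.take i).foldl M.δ q) := by
    intro i hs
    have hlen : (w.take (i : ℕ)).length = (i : ℕ) := by
      rw [List.length_take]; omega
    exact hmin i i.isLt _ hlen hs
  have hne : ∀ i j : ℕ, i < j → j < m →
      (w.take i).foldl M.δ q ≠ (w.take j).foldl M.δ q := by
    intro i j hij hjm heq
    have hsink : MSink M ((w.take i ++ w.drop j).foldl M.δ q) := by
      rw [List.foldl_append, heq, ← List.foldl_append, List.take_append_drop]
      exact hwsink
    have hlen : (w.take i ++ w.drop j).length = i + (m - j) := by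
      simp [List.length_append, List.length_take, List.length_drop]
      omega
    exact hmin (i + (m - j)) (by omega) _ hlen hsink
  let f : Fin m → {p : M.Q // ¬ MSink M p} := fun i => ⟨(w.take (i : ℕ)).foldl M.δ q, hns i⟩
  have hinj : Function.Injective f := by
    intro i j hij
    have := congrArg Subtype.val hij
    simp only [f] at this
    rcases lt_trichotomy (i : ℕ) (j : ℕ) with h | h | h
    · exact absurd this (hne i j h j.isLt)
    · exact Fin.ext h
    · exact absurd this.symm (hne j i h i.isLt)
  have := Nat.card_le_card_of_injective f hinj
  simp [Nat.card_eq_fintype_card] at this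
  omega

lemma kill_all :
    ∃ w : List A, w.length ≤ (Nat.card {p : M.Q // ¬ MSink M p}) ^ 2 ∧
      ∀ q : M.Q, MSink M (w.foldl M.δ q) := by
  classical
  haveI := M.finQ
  haveI : Fintype M.Q := Fintype.ofFinite M.Q
  set k := Nat.card {p : M.Q // ¬ MSink M p} with hk
  have key : ∀ S : Finset M.Q, ∃ w : List A, w.length ≤ S.card * k ∧
      ∀ q ∈ S, MSink M (w.foldl M.δ q) := by
    intro S
    induction S using Finset.induction_on with
    | empty => exact ⟨[], by simp, by simp⟩
    | insert _ _ hq ih =>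
      rename_i a S'
      obtain ⟨w, hwl, hws⟩ := ih
      obtain ⟨v, hvl, hvs⟩ := reach_short M (w.foldl M.δ a)
      refine ⟨w ++ v, ?_, ?_⟩
      · rw [List.length_append, Finset.card_insert_of_notMem hq]
        nlinarith
      · intro p hp
        rcases Finset.mem_insert.mp hp with rfl | hp
        · rw [List.foldl_append]; exact hvs
        · rw [List.foldl_append, msink_absorb M (hws p hp)]; exact hws p hp
  obtain ⟨w, hwl, hws⟩ := key (Finset.univ.filter (fun p => ¬ MSink M p))
  have hcard : (Finset.univ.filter (fun p => ¬ MSink M p)).card = k := by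
    rw [hk, Nat.card_eq_fintype_card, Fintype.card_subtype]
  refine ⟨w, by rw [hcard] at hwl; nlinarith, ?_⟩
  intro q
  by_cases hs : MSink M q
  · rw [msink_absorb M hs]; exact hs
  · exact hws q (Finset.mem_filter.mpr ⟨Finset.mem_univ q, hs⟩)

lemma card_bound : Nat.card {p : M.Q // ¬ MSink M p} ≤ M.states - 1 := by
  classical
  haveI := M.finQ
  haveI : Fintype M.Q := Fintype.ofFinite M.Q
  have hcompl : Fintype.card {p : M.Q // ¬ MSink M p}
      = Fintype.card M.Q - Fintype.card {p : M.Q // MSink M p} :=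
    Fintype.card_subtype_compl _
  have h1 : 1 ≤ Fintype.card {p : M.Q // MSink M p} := by
    rcases M.sink_exists with h | h
    · obtain ⟨p, hp⟩ := Option.isSome_iff_exists.mp h
      exact Fintype.card_pos_iff.mpr ⟨⟨p, Or.inl hp⟩⟩
    · obtain ⟨p, hp⟩ := Option.isSome_iff_exists.mp h
      exact Fintype.card_pos_iff.mpr ⟨⟨p, Or.inr hp⟩⟩
  rw [Monitor.states]
  by_cases hb : M.bot.isSome ∧ M.top.isSome
  · obtain ⟨p, hp⟩ := Option.isSome_iff_exists.mp hb.1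
    obtain ⟨q, hq⟩ := Option.isSome_iff_exists.mp hb.2
    have hne := M.bot_ne_top p q hp hq
    have h2 : 1 < Fintype.card {p : M.Q // MSink M p} :=
      Fintype.one_lt_card_iff.mpr ⟨⟨p, Or.inl hp⟩, ⟨q, Or.inr hq⟩, fun h => hne (congrArg Subtype.val h)⟩
    simp only [hb.1, hb.2, Bool.and_self, if_true]
    rw [Nat.card_eq_fintype_card, Nat.card_eq_fintype_card, hcompl]
    omega
  · have hff : (M.bot.isSome && M.top.isSome) = false := by
      rcases Decidable.not_and_iff_or_not.mp hb with h | h <;> simp [Bool.not_eq_true] at h <;>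
        simp [h]
    rw [hff]
    rw [Nat.card_eq_fintype_card, Nat.card_eq_fintype_card, hcompl]
    simp only [Bool.false_eq_true, if_false]
    omega

end MP

/-- If `M` is a monitor for `L` with `n` states, then there is a word `w` of
length at most `(n-1)^2` such that for every `x`, either `xwΣ^ω ⊆ L` or
`xwΣ^ω ∩ L = ∅`. -/
theorem stmt7 {A : Type*} [Fintype A] [Nonempty A] (L : Set (ℕ → A))
    (M : Monitor A) (hM : M.IsMonitorFor L) (n : ℕ) (hn : M.states = n) :
    ∃ w : List A, w.length ≤ (n - 1) ^ 2 ∧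
      ∀ x : List A, (∀ α, cat (x ++ w) α ∈ L) ∨ (∀ α, cat (x ++ w) α ∉ L) := by
  obtain ⟨w, hwl, hws⟩ := MP.kill_all M
  have hcb := MP.card_bound M
  refine ⟨w, ?_, ?_⟩
  · calc w.length ≤ (Nat.card {p : M.Q // ¬ MP.MSink M p}) ^ 2 := hwl
      _ ≤ (M.states - 1) ^ 2 := Nat.pow_le_pow_left hcb 2
      _ = (n - 1) ^ 2 := by rw [hn]
  · intro x
    have h := hws ((x).foldl M.δ M.init)
    rw [← List.foldl_append] at h
    rcases h with hb | ht
    · exact Or.inr ((hM (x ++ w)).1 hb)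
    · exact Or.inl ((hM (x ++ w)).2 ht)
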